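/- With the data E₀, E₁, π₀, π₁, U, T₀, T₁, N₀, N₁ and V(T₀,T₁) as in the context: if V(T₀,T₁)^⊥ ⊆ V(T₀,T₁), then π₀(N₀) ⊆ T₀ and π₁(N₁) ⊆ T₁ (i.e. T₀ and T₁ are coisotropic for π₀ and π₁ respectively). -/

import Mathlib

open MeasureTheory Set

/-- An element of `W(E)`: a pair `(λ, φ)` of continuous maps on `[0,1]` with values in `E`
and in the dual `E* = E →L[ℝ] ℝ` respectively. -/
structure WPair (E : Type*) [NormedAddCommGroup E] [NormedSpace ℝ E] where
  lam : ℝ → E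
  phi : ℝ → E →L[ℝ] ℝ
  lam_cont : ContinuousOn lam (Icc 0 1)
  phi_cont : ContinuousOn phi (Icc 0 1)

/-- The alternating bilinear form `Ω((λ,φ),(λ',φ')) = ∫₀¹ (φ(u)(λ'(u)) − φ'(u)(λ(u))) du`. -/
noncomputable def Omega {E : Type*} [NormedAddCommGroup E] [NormedSpace ℝ E]
    (w w' : WPair E) : ℝ :=
  ∫ u in (0:ℝ)..(1:ℝ), (w.phi u (w'.lam u) - w'.phi u (w.lam u))

/-- The `Ω`-orthogonal of a subset of `W(E)`. -/
def orth {E : Type*} [NormedAddCommGroup E] [NormedSpace ℝ E] (A : Set (WPair E)) :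
    Set (WPair E) :=
  {w | ∀ a ∈ A, Omega a w = 0}

/-- The annihilator `N = { α ∈ E* : α vanishes on T }` of a subspace `T ⊆ E`. -/
def Ann {E : Type*} [NormedAddCommGroup E] [NormedSpace ℝ E] (T : Submodule ℝ E) :
    Set (E →L[ℝ] ℝ) :=
  {α | ∀ v ∈ T, α v = 0}

/-- The space `V(T₀,T₁)` of solutions `(λ,φ)` of `λ(u) = λ(0) − π₀ ∫₀ᵘ φ` with boundary
conditions `λ(0) ∈ T₀` and `U⁻¹(λ(1)) ∈ T₁`. -/
noncomputable def VSet {E₀ E₁ : Type*}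
    [NormedAddCommGroup E₀] [NormedSpace ℝ E₀]
    [NormedAddCommGroup E₁] [NormedSpace ℝ E₁]
    (π₀ : (E₀ →L[ℝ] ℝ) →ₗ[ℝ] E₀) (U : E₁ ≃L[ℝ] E₀)
    (T₀ : Submodule ℝ E₀) (T₁ : Submodule ℝ E₁) : Set (WPair E₀) :=
  {w | (∀ u ∈ Icc (0:ℝ) 1, w.lam u = w.lam 0 - π₀ (∫ s in (0:ℝ)..u, w.phi s)) ∧
       w.lam 0 ∈ T₀ ∧ U.symm (w.lam 1) ∈ T₁}


section Aux
variable {E : Type*} [NormedAddCommGroup E] [NormedSpace ℝ E]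


noncomputable def mkW (π₀ : (E →L[ℝ] ℝ) →ₗ[ℝ] E) (β : E →L[ℝ] ℝ) (c : E) : WPair E :=
  ⟨fun u => c - u • π₀ β, fun _ => β,
    Continuous.continuousOn (by fun_prop), continuousOn_const⟩

@[simp] lemma mkW_lam (π₀ : (E →L[ℝ] ℝ) →ₗ[ℝ] E) (β : E →L[ℝ] ℝ) (c : E) (u : ℝ) :
    (mkW π₀ β c).lam u = c - u • π₀ β := rfl

@[simp] lemma mkW_phi (π₀ : (E →L[ℝ] ℝ) →ₗ[ℝ] E) (β : E →L[ℝ] ℝ) (c : E) (u : ℝ) :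
    (mkW π₀ β c).phi u = β := rfl

lemma phi_intInt (a : WPair E) {u v : ℝ} (hu : u ∈ Icc (0:ℝ) 1) (hv : v ∈ Icc (0:ℝ) 1) :
    IntervalIntegrable a.phi volume u v := by
  apply (a.phi_cont.mono ?_).intervalIntegrable
  exact uIcc_subset_Icc hu hv

lemma key_deriv (a : WPair E) (v : E) {u : ℝ} (hu : u ∈ Ioo (0:ℝ) 1) :
    HasDerivAt (fun t => (∫ s in (0:ℝ)..t, a.phi s) v) (a.phi u v) u := by
  have hu' : u ∈ Icc (0:ℝ) 1 := Ioo_subset_Icc_self hu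
  haveI : SecondCountableTopologyEither ℝ (E →L[ℝ] ℝ) := ⟨Or.inl inferInstance⟩
  have hF : HasDerivAt (fun t => ∫ s in (0:ℝ)..t, a.phi s) (a.phi u) u := by
    apply intervalIntegral.integral_hasDerivAt_right
      (phi_intInt a (left_mem_Icc.2 zero_le_one) hu')
    · exact (a.phi_cont.mono Ioo_subset_Icc_self).stronglyMeasurableAtFilter isOpen_Ioo u hu
    · exact (a.phi_cont.mono Ioo_subset_Icc_self).continuousAt (isOpen_Ioo.mem_nhds hu)
  have := hF.clm_apply (hasDerivAt_const u v)
  simpa using this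

lemma key_integral (π₀ : (E →L[ℝ] ℝ) →ₗ[ℝ] E)
    (hskew : ∀ α β : E →L[ℝ] ℝ, α (π₀ β) = - β (π₀ α))
    (β : E →L[ℝ] ℝ) (c : E) (a : WPair E)
    (ha : ∀ u ∈ Icc (0:ℝ) 1, a.lam u = a.lam 0 - π₀ (∫ s in (0:ℝ)..u, a.phi s)) :
    (∫ u in (0:ℝ)..1, (a.phi u (c - u • π₀ β) - β (a.lam u)))
      = (∫ s in (0:ℝ)..1, a.phi s) (c - π₀ β) - β (a.lam 0) := by
  set F : ℝ → E →L[ℝ] ℝ := fun t => ∫ s in (0:ℝ)..t, a.phi s with hFdef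
  set g : ℝ → ℝ := fun t => F t (c - t • π₀ β) - t * β (a.lam 0) with hgdef
  have hFc : ContinuousOn F (Icc (0:ℝ) 1) := by
    have := intervalIntegral.continuousOn_primitive_interval
      (f := a.phi) (μ := volume) (a := (0:ℝ)) (b := 1)
      ((a.phi_cont.mono (by rw [uIcc_of_le zero_le_one])).integrableOn_compact isCompact_uIcc)
    simpa [hFdef, uIcc_of_le (zero_le_one (α := ℝ))] using this
  have hgc : ContinuousOn g (Icc (0:ℝ) 1) := by
    apply ContinuousOn.sub
    · exact hFc.clm_apply (Continuous.continuousOn (by fun_prop))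
    · fun_prop
  have hderiv : ∀ u ∈ Ioo (0:ℝ) 1,
      HasDerivWithinAt g (a.phi u (c - u • π₀ β) - β (a.lam u)) (Ioi u) u := by
    intro u hu
    have hu' : u ∈ Icc (0:ℝ) 1 := Ioo_subset_Icc_self hu
    have h1 : HasDerivAt (fun t => F t c) (a.phi u c) u := key_deriv a c hu
    have h2 : HasDerivAt (fun t => t * F t (π₀ β))
        (1 * F u (π₀ β) + u * a.phi u (π₀ β)) u :=
      (hasDerivAt_id u).mul (key_deriv a (π₀ β) hu)
    have h3 : HasDerivAt (fun t => t * β (a.lam 0)) (β (a.lam 0)) u := by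
      simpa using (hasDerivAt_id u).mul_const (β (a.lam 0))
    have hg2 : g = fun t => F t c - t * F t (π₀ β) - t * β (a.lam 0) := by
      funext t
      simp only [hgdef, map_sub, _root_.map_smul, smul_eq_mul]
    rw [hg2]
    have hD : HasDerivAt (fun t => F t c - t * F t (π₀ β) - t * β (a.lam 0))
        (a.phi u c - (1 * F u (π₀ β) + u * a.phi u (π₀ β)) - β (a.lam 0)) u :=
      (h1.sub h2).sub h3
    have heq : a.phi u c - (1 * F u (π₀ β) + u * a.phi u (π₀ β)) - β (a.lam 0)
        = a.phi u (c - u • π₀ β) - β (a.lam u) := by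
      rw [ha u hu']
      have hs : β (π₀ (∫ s in (0:ℝ)..u, a.phi s)) = - (F u) (π₀ β) := hskew β (F u)
      simp only [map_sub, _root_.map_smul, smul_eq_mul, hs]
      ring
    rw [heq] at hD
    exact hD.hasDerivWithinAt
  have hint : IntervalIntegrable
      (fun u => a.phi u (c - u • π₀ β) - β (a.lam u)) volume 0 1 := by
    apply ContinuousOn.intervalIntegrable
    rw [uIcc_of_le (zero_le_one (α := ℝ))]
    apply ContinuousOn.sub
    · exact a.phi_cont.clm_apply (Continuous.continuousOn (by fun_prop))
    · exact β.continuous.comp_continuousOn a.lam_cont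
  have := intervalIntegral.integral_eq_sub_of_hasDeriv_right_of_le zero_le_one hgc hderiv hint
  rw [this]
  simp [hgdef, hFdef, intervalIntegral.integral_same]

end Aux

theorem coisotropic_boundary_of_VSet_coisotropic
    (E₀ E₁ : Type*)
    [NormedAddCommGroup E₀] [NormedSpace ℝ E₀] [FiniteDimensional ℝ E₀]
    [NormedAddCommGroup E₁] [NormedSpace ℝ E₁] [FiniteDimensional ℝ E₁]
    (π₀ : (E₀ →L[ℝ] ℝ) →ₗ[ℝ] E₀) (π₁ : (E₁ →L[ℝ] ℝ) →ₗ[ℝ] E₁)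
    (hskew₀ : ∀ α β : E₀ →L[ℝ] ℝ, α (π₀ β) = - β (π₀ α))
    (hskew₁ : ∀ α β : E₁ →L[ℝ] ℝ, α (π₁ β) = - β (π₁ α))
    (U : E₁ ≃L[ℝ] E₀)
    (hU : ∀ α : E₀ →L[ℝ] ℝ, U (π₁ (α.comp (U : E₁ →L[ℝ] E₀))) = π₀ α)
    (T₀ : Submodule ℝ E₀) (T₁ : Submodule ℝ E₁)
    (hco : orth (VSet π₀ U T₀ T₁) ⊆ VSet π₀ U T₀ T₁) :
    (∀ α ∈ Ann T₀, π₀ α ∈ T₀) ∧ (∀ α ∈ Ann T₁, π₁ α ∈ T₁) := by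
  have homega : ∀ (β : E₀ →L[ℝ] ℝ) (c : E₀) (a : WPair E₀),
      a ∈ VSet π₀ U T₀ T₁ →
      Omega a (mkW π₀ β c) = (∫ s in (0:ℝ)..1, a.phi s) (c - π₀ β) - β (a.lam 0) := by
    intro β c a ha
    have : Omega a (mkW π₀ β c)
        = ∫ u in (0:ℝ)..1, (a.phi u (c - u • π₀ β) - β (a.lam u)) := rfl
    rw [this, key_integral π₀ hskew₀ β c a ha.1]
  constructor
  · intro α hα
    have hw : mkW π₀ α (π₀ α) ∈ orth (VSet π₀ U T₀ T₁) := by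
      intro a ha
      rw [homega α (π₀ α) a ha]
      simp [hα _ ha.2.1]
    have h0 := (hco hw).2.1
    simpa using h0
  · intro α hα
    set β : E₀ →L[ℝ] ℝ := α.comp (U.symm : E₀ →L[ℝ] E₁) with hβ
    have hβU : β.comp (U : E₁ →L[ℝ] E₀) = α := by
      ext x; simp [hβ]
    have hw : mkW π₀ β 0 ∈ orth (VSet π₀ U T₀ T₁) := by
      intro a ha
      rw [homega β 0 a ha]
      have h1 := ha.1 1 (right_mem_Icc.2 zero_le_one)
      have hs : (∫ s in (0:ℝ)..1, a.phi s) (π₀ β)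
          = - β (π₀ (∫ s in (0:ℝ)..1, a.phi s)) := hskew₀ _ β
      have hb : β (a.lam 1) = 0 := by
        have : β (a.lam 1) = α (U.symm (a.lam 1)) := by simp [hβ]
        rw [this]; exact hα _ ha.2.2
      have h2 : β (a.lam 1) = β (a.lam 0) - β (π₀ (∫ s in (0:ℝ)..1, a.phi s)) := by
        rw [h1]; simp
      simp only [zero_sub, map_neg, hs]
      rw [hb] at h2
      linarith [h2]
    have h1 := (hco hw).2.2
    have hwl : (mkW π₀ β 0).lam 1 = - π₀ β := by simp
    rw [hwl] at h1
    have hπ : U.symm (π₀ β) = π₁ α := by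
      have := hU β
      rw [hβU] at this
      rw [← this]; simp
    rw [map_neg, hπ] at h1
    simpa using T₁.neg_mem h1
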